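/- Let l ≥ 1 and let p₁, …, p_l be pairwise coprime integers with each p_i ≥ 2. Then there exists a unique tuple of integers (e₀, p₁', …, p_l') satisfying e₀·p₁⋯p_l + ∑_{i=1}^{l} p_i'·∏_{j≠i} p_j = −1 and 1 ≤ p_i' ≤ p_i − 1 for every i. -/

import Mathlib

/-- Let `l ≥ 1` and let `p₁, …, p_l` be pairwise coprime integers with each `p_i ≥ 2`.
Then there exists a unique tuple of integers `(e₀, p₁', …, p_l')` satisfying
`e₀·p₁⋯p_l + ∑_{i=1}^{l} p_i'·∏_{j≠i} p_j = −1` and `1 ≤ p_i' ≤ p_i − 1` for every `i`. -/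
theorem stmt5 (l : ℕ) (hl : 1 ≤ l) (p : Fin l → ℤ)
    (hp2 : ∀ i, 2 ≤ p i)
    (hcop : ∀ i j : Fin l, i ≠ j → Int.gcd (p i) (p j) = 1) :
    ∃! ep : ℤ × (Fin l → ℤ),
      ep.1 * ∏ j, p j + ∑ i, ep.2 i * ∏ j ∈ Finset.univ.erase i, p j = -1 ∧
      ∀ i, 1 ≤ ep.2 i ∧ ep.2 i ≤ p i - 1 := by
  set P : ℤ := ∏ j, p j with hP
  set Q : Fin l → ℤ := fun i => ∏ j ∈ Finset.univ.erase i, p j with hQ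
  have hp0 : ∀ i, (0:ℤ) < p i := fun i => lt_of_lt_of_le (by norm_num) (hp2 i)
  have hPQ : ∀ i, p i * Q i = P := fun i =>
    Finset.mul_prod_erase _ _ (Finset.mem_univ i)
  have hP0 : 0 < P := Finset.prod_pos fun i _ => hp0 i
  have hcop' : ∀ i, IsCoprime (p i) (Q i) := by
    intro i
    apply IsCoprime.prod_right
    intro j hj
    exact Int.isCoprime_iff_gcd_eq_one.mpr
      (hcop i j (Ne.symm (Finset.mem_erase.mp hj).1))
  have hdvdQ : ∀ i j : Fin l, i ≠ j → p i ∣ Q j := by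
    intro i j hij
    exact Finset.dvd_prod_of_mem p (Finset.mem_erase.mpr ⟨hij, Finset.mem_univ i⟩)
  -- construct q i
  have key : ∀ i, ∃ q : ℤ, (1 ≤ q ∧ q ≤ p i - 1) ∧ p i ∣ q * Q i + 1 := by
    intro i
    have hg : Int.gcd (Q i) (p i) = 1 :=
      Int.isCoprime_iff_gcd_eq_one.mp (hcop' i).symm
    have hbez : (1:ℤ) = Q i * Int.gcdA (Q i) (p i) + p i * Int.gcdB (Q i) (p i) := by
      have := Int.gcd_eq_gcd_ab (Q i) (p i)
      rw [hg] at this; exact_mod_cast this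
    set a := Int.gcdA (Q i) (p i) with ha
    obtain ⟨k, hk⟩ : ∃ k, (-a) % p i = -a + p i * k :=
      ⟨-((-a) / p i), by rw [Int.emod_def]; ring⟩
    have hdvd : p i ∣ (-a) % p i * Q i + 1 := by
      refine ⟨Int.gcdB (Q i) (p i) + k * Q i, ?_⟩
      rw [hk]; linear_combination hbez
    have hnn : 0 ≤ (-a) % p i := Int.emod_nonneg _ (ne_of_gt (hp0 i))
    have hlt : (-a) % p i < p i := Int.emod_lt_of_pos _ (hp0 i)
    have hne : (-a) % p i ≠ 0 := by
      intro h
      rw [h, zero_mul, zero_add] at hdvd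
      have := Int.le_of_dvd (by norm_num) hdvd
      have := hp2 i; omega
    exact ⟨(-a) % p i, ⟨by omega, by omega⟩, hdvd⟩
  choose q hqb hqd using key
  set S : ℤ := ∑ i, q i * Q i with hS
  have hPdvd : P ∣ S + 1 := by
    apply Finset.prod_dvd_of_coprime
    · intro i _ j hj hij
      exact Int.isCoprime_iff_gcd_eq_one.mpr (hcop i j hij)
    · intro i _
      have h1 : p i ∣ ∑ j ∈ Finset.univ.erase i, q j * Q j := by
        apply Finset.dvd_sum
        intro j hj
        exact Dvd.dvd.mul_left (hdvdQ i j (Ne.symm (Finset.mem_erase.mp hj).1)) _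
      have h2 : S + 1 = (q i * Q i + 1) + ∑ j ∈ Finset.univ.erase i, q j * Q j := by
        rw [hS, ← Finset.add_sum_erase _ _ (Finset.mem_univ i)]; ring
      rw [h2]
      exact dvd_add (hqd i) h1
  obtain ⟨t, ht⟩ := hPdvd
  refine ⟨⟨-t, q⟩, ⟨by simp only; linear_combination ht, hqb⟩, ?_⟩
  rintro ⟨e', q'⟩ ⟨hsum', hb'⟩
  simp only at hsum' hb' ⊢
  -- show q' = q
  have hqq : q' = q := by
    funext i
    have hdiff : p i ∣ (q' i - q i) * Q i := by
      have h2 : -t * P + S = -1 := by linear_combination ht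
      have hsum'' : (e' + t) * P + ∑ j, (q' j - q j) * Q j = 0 := by
        have : ∑ j, (q' j - q j) * Q j = (∑ j, q' j * Q j) - S := by
          rw [hS, ← Finset.sum_sub_distrib]
          exact Finset.sum_congr rfl fun j _ => by ring
        rw [this]; linarith [hsum']
      have hsplit : (q' i - q i) * Q i
          = -((e' + t) * P) - ∑ j ∈ Finset.univ.erase i, (q' j - q j) * Q j := by
        have h3 := Finset.add_sum_erase Finset.univ (fun j => (q' j - q j) * Q j)
          (Finset.mem_univ i)
        linarith [hsum'', h3]
      rw [hsplit]
      apply dvd_sub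
      · exact dvd_neg.mpr (Dvd.dvd.mul_left ⟨Q i, (hPQ i).symm⟩ _)
      · apply Finset.dvd_sum
        intro j hj
        exact Dvd.dvd.mul_left (hdvdQ i j (Ne.symm (Finset.mem_erase.mp hj).1)) _
    have hdvd2 : p i ∣ q' i - q i := (hcop' i).dvd_of_dvd_mul_right hdiff
    obtain ⟨c, hc⟩ := hdvd2
    have hb1 := hb' i
    have hb2 := hqb i
    have hc0 : c = 0 := by
      rcases lt_trichotomy c 0 with h | h | h
      · nlinarith [hp0 i]
      · exact h
      · nlinarith [hp0 i]
    have : q' i - q i = 0 := by rw [hc, hc0, mul_zero]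
    omega
  subst hqq
  have hee : e' * P = -t * P := by
    have h2 : -t * P + S = -1 := by linear_combination ht
    linarith [hsum']
  have : e' = -t := mul_right_cancel₀ (ne_of_gt hP0) hee
  simp [this]
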